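/- Let O and Ô be linear orders on a finite set C of parties, let A ⊆ C, c_1 ∈ A, and let a, b ∈ A∖{c_1} be parties with a above b in O but b above a in Ô. Let Ô' be the linear order obtained from Ô by exchanging the positions of a and b. Then: (1) Borda(Ô', c_1) = Borda(Ô, c_1); (2) Borda(Ô', A∖{c_1}) = Borda(Ô, A∖{c_1}); (3) the number of inverted pairs of (O, Ô') is strictly smaller than the number of inverted pairs of (O, Ô); and (4) if Ô satisfies that for every x ∈ A and y ∉ A, x above y in O implies x above y in Ô, then Ô' satisfies the same property. -/

import Mathlib

open Finset

namespace Stmt14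

/-- The Borda score of party `c` under the linear order `O`:
`Borda(O,c) = m − pos(O,c)`, where `pos(O,c) = (O c).val + 1`. -/
def borda {C : Type*} [Fintype C] (O : C ≃ Fin (Fintype.card C)) (c : C) : ℕ :=
  Fintype.card C - 1 - (O c).val

/-- The total Borda score of a set `S` of parties. -/
def bordaSum {C : Type*} [Fintype C] (O : C ≃ Fin (Fintype.card C)) (S : Finset C) : ℕ :=
  ∑ c ∈ S, borda O c

/-- The inverted pairs of `(O, Ob)`: pairs `(x, y)` with `y` below `x` in `O`
and `y` above `x` in `Ob`. -/
def invPairs {C : Type*} [Fintype C] [DecidableEq C]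
    (O Ob : C ≃ Fin (Fintype.card C)) : Finset (C × C) :=
  (Finset.univ : Finset (C × C)).filter fun q => O q.1 < O q.2 ∧ Ob q.2 < Ob q.1

/-- exchanging the positions (in `Ob`) of two parties `a, b ∈ A∖{c₁}`
with `a` above `b` in `O` but `b` above `a` in `Ob` preserves the Borda scores of `c₁`
and of `A∖{c₁}`, strictly decreases the number of inverted pairs, and preserves the
property that no party of `A` drops below a party outside `A`. -/
theorem stmt_14 {C : Type*} [Fintype C] [DecidableEq C]
    (O Ob : C ≃ Fin (Fintype.card C)) (A : Finset C) (c1 : C) (hc1 : c1 ∈ A)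
    (a b : C) (ha : a ∈ A.erase c1) (hb : b ∈ A.erase c1)
    (hO : O a < O b) (hOb : Ob b < Ob a) :
    borda ((Equiv.swap a b).trans Ob) c1 = borda Ob c1 ∧
    bordaSum ((Equiv.swap a b).trans Ob) (A.erase c1) = bordaSum Ob (A.erase c1) ∧
    (invPairs O ((Equiv.swap a b).trans Ob)).card < (invPairs O Ob).card ∧
    ((∀ x ∈ A, ∀ y ∉ A, O x < O y → Ob x < Ob y) →
      (∀ x ∈ A, ∀ y ∉ A, O x < O y →
        ((Equiv.swap a b).trans Ob) x < ((Equiv.swap a b).trans Ob) y)) := by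
  have hab : a ≠ b := fun h => absurd hO (by simp [h])
  have hac : a ≠ c1 := (Finset.mem_erase.mp ha).1
  have hbc : b ≠ c1 := (Finset.mem_erase.mp hb).1
  have haA : a ∈ A := (Finset.mem_erase.mp ha).2
  have hbA : b ∈ A := (Finset.mem_erase.mp hb).2
  set σ := Equiv.swap a b with hσ
  have hσa : σ a = b := Equiv.swap_apply_left a b
  have hσb : σ b = a := Equiv.swap_apply_right a b
  have hσo : ∀ x, x ≠ a → x ≠ b → σ x = x := fun x h1 h2 =>
    Equiv.swap_apply_of_ne_of_ne h1 h2
  have hσσ : ∀ x, σ (σ x) = x := fun x => Equiv.swap_apply_self a b x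
  refine ⟨?_, ?_, ?_, ?_⟩
  · simp [borda, Equiv.trans_apply, hσ, hσo c1 (Ne.symm hac) (Ne.symm hbc),
      Equiv.swap_apply_of_ne_of_ne (Ne.symm hac) (Ne.symm hbc)]
  · unfold bordaSum
    refine Finset.sum_equiv σ ?_ ?_
    · intro i
      by_cases hia : i = a
      · subst hia; simp [hσa, ha, hb]
      by_cases hib : i = b
      · subst hib; simp [hσb, ha, hb]
      · rw [hσo i hia hib]
    · intro i _
      simp [borda, Equiv.trans_apply]
  · have habm : (a, b) ∈ invPairs O Ob := by
      simp [invPairs, hO, hOb]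
    set f : C × C → C × C := fun p =>
      if O (σ p.1) < O (σ p.2) then (σ p.1, σ p.2) else p with hf
    have hmem : ∀ p ∈ invPairs O (σ.trans Ob), f p ∈ (invPairs O Ob).erase (a, b) := by
      rintro ⟨x, y⟩ hp
      simp only [invPairs, Finset.mem_filter, Finset.mem_univ, true_and,
        Equiv.trans_apply] at hp
      obtain ⟨h1, h2⟩ : O x < O y ∧ Ob (σ y) < Ob (σ x) :=
        (Finset.mem_filter.mp (show (x, y) ∈ invPairs O (σ.trans Ob) from hp)).2
      have mk_mem : ∀ u v : C, (u, v) ≠ (a, b) → O u < O v → Ob v < Ob u →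
          ((u, v) : C × C) ∈ (invPairs O Ob).erase (a, b) := by
        intro u v hne hu hv
        exact Finset.mem_erase.mpr ⟨hne, by simp [invPairs, hu, hv]⟩
      by_cases hxa : x = a
      · by_cases hyb : y = b
        · rw [hxa, hyb, hσa, hσb] at h2
          exact absurd h2 (not_lt.mpr hOb.le)
        · have hya : y ≠ a := fun h => absurd h1 (by rw [hxa, h]; exact lt_irrefl _)
          rw [hxa] at h1 h2 ⊢
          rw [hσa, hσo y hya hyb] at h2
          simp only [hf]
          by_cases hcond : O (σ a) < O (σ y)
          · rw [if_pos hcond, hσa, hσo y hya hyb]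
            rw [hσa, hσo y hya hyb] at hcond
            exact mk_mem b y (fun h => hab (congrArg Prod.fst h).symm) hcond h2
          · rw [if_neg hcond]
            exact mk_mem a y (by simp [hyb]) h1 (h2.trans hOb)
      · by_cases hxb : x = b
        · by_cases hya : y = a
          · rw [hxb, hya] at h1; exact absurd h1 (not_lt.mpr hO.le)
          · have hyb : y ≠ b := fun h => absurd h1 (by rw [hxb, h]; exact lt_irrefl _)
            rw [hxb] at h1 h2 ⊢
            rw [hσb, hσo y hya hyb] at h2
            simp only [hf]
            have hcond : O (σ b) < O (σ y) := by
              rw [hσb, hσo y hya hyb]; exact hO.trans h1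
            rw [if_pos hcond, hσb, hσo y hya hyb]
            exact mk_mem a y (by simp [hyb]) (hO.trans h1) h2
        · -- x ∉ {a, b}
          by_cases hya : y = a
          · rw [hya] at h1 h2 ⊢
            rw [hσa, hσo x hxa hxb] at h2
            simp only [hf]
            have hcond : O (σ x) < O (σ a) := by
              rw [hσa, hσo x hxa hxb]; exact h1.trans hO
            rw [if_pos hcond, hσa, hσo x hxa hxb]
            exact mk_mem x b (by simp [hxa]) (h1.trans hO) h2
          · by_cases hyb : y = b
            · rw [hyb] at h1 h2 ⊢
              rw [hσb, hσo x hxa hxb] at h2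
              simp only [hf]
              by_cases hcond : O (σ x) < O (σ b)
              · rw [if_pos hcond, hσb, hσo x hxa hxb]
                rw [hσb, hσo x hxa hxb] at hcond
                exact mk_mem x a (by simp [hxa, hab ∘ Eq.symm]) hcond h2
              · rw [if_neg hcond]
                exact mk_mem x b (by simp [hxa]) h1 (hOb.trans h2)
            · rw [hσo x hxa hxb, hσo y hya hyb] at h2
              simp only [hf]
              have hcond : O (σ x) < O (σ y) := by
                rw [hσo x hxa hxb, hσo y hya hyb]; exact h1
              rw [if_pos hcond, hσo x hxa hxb, hσo y hya hyb]
              exact mk_mem x y (by simp [hxa]) h1 h2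
    have hinj : Set.InjOn f ↑(invPairs O (σ.trans Ob)) := by
      intro p hp q hq hfq
      simp only [invPairs, Finset.coe_filter, Set.mem_setOf_eq,
        Equiv.trans_apply] at hp hq
      simp only [hf] at hfq
      split_ifs at hfq with h1 h2 h2
      · have e1 : σ p.1 = σ q.1 := congrArg Prod.fst hfq
        have e2 : σ p.2 = σ q.2 := congrArg Prod.snd hfq
        exact Prod.ext (σ.injective e1) (σ.injective e2)
      · exfalso
        have e1 : q.1 = σ p.1 := (congrArg Prod.fst hfq).symm
        have e2 : q.2 = σ p.2 := (congrArg Prod.snd hfq).symm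
        rw [e1, e2, hσσ, hσσ] at h2
        exact h2 (Finset.mem_filter.mp (show p ∈ invPairs O (σ.trans Ob) from hp)).2.1
      · exfalso
        have e1 : p.1 = σ q.1 := congrArg Prod.fst hfq
        have e2 : p.2 = σ q.2 := congrArg Prod.snd hfq
        rw [e1, e2, hσσ, hσσ] at h1
        exact h1 (Finset.mem_filter.mp (show q ∈ invPairs O (σ.trans Ob) from hq)).2.1
      · exact hfq
    calc (invPairs O (σ.trans Ob)).card
        ≤ ((invPairs O Ob).erase (a, b)).card :=
          Finset.card_le_card_of_injOn f hmem hinj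
      _ < (invPairs O Ob).card := Finset.card_erase_lt_of_mem habm
  · intro h x hx y hy hxy
    have hya : y ≠ a := fun h' => hy (h' ▸ haA)
    have hyb : y ≠ b := fun h' => hy (h' ▸ hbA)
    simp only [Equiv.trans_apply]
    rw [show Equiv.swap a b y = y from hσo y hya hyb]
    by_cases hxa : x = a
    · rw [hxa] at hxy ⊢
      rw [show Equiv.swap a b a = b from hσa]
      exact lt_trans hOb (h a haA y hy hxy)
    by_cases hxb : x = b
    · rw [hxb] at hxy ⊢
      rw [show Equiv.swap a b b = a from hσb]
      exact h a haA y hy (lt_trans hO hxy)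
    · rw [show Equiv.swap a b x = x from hσo x hxa hxb]
      exact h x hx y hy hxy

end Stmt14
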